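/- Let T = A + iB be a bounded operator on a complex Hilbert space with T² = S self-adjoint. If A ≥ 0 or A ≤ 0 or B ≥ 0 or B ≤ 0, then T is normal. -/

import Mathlib

set_option synthInstance.maxHeartbeats 1000000
set_option maxHeartbeats 1000000

open scoped NNReal

lemma commute_cfc_of_commute {𝔸 : Type*} [CStarAlgebra 𝔸] {a b : 𝔸} [ha : IsStarNormal a]
    (h : Commute a b) (hs : Commute (star a) b) (f : ℂ → ℂ) : Commute (cfc f a) b := by
  have H : ∀ x ∈ StarAlgebra.elemental ℂ a, Commute x b := by
    intro x hx
    induction hx using StarAlgebra.elemental.induction_on with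
    | self => exact h
    | star_self => exact hs
    | algebraMap r => exact Algebra.commutes r b
    | add u hu v hv pu pv => exact pu.add_left pv
    | mul u hu v hv pu pv => exact pu.mul_left pv
    | closure s hs' hps v hv =>
        have hcl : IsClosed {u : 𝔸 | Commute u b} :=
          isClosed_eq (continuous_id.mul continuous_const) (continuous_const.mul continuous_id)
        exact closure_minimal (fun u hu => hps u hu) hcl hv
  by_cases hf : ContinuousOn f (spectrum ℂ a)
  · rw [cfc_apply f a ha hf, cfcHom_eq_of_isStarNormal]
    exact H _ (SetLike.coe_mem _)
  · rw [cfc_apply_of_not_continuousOn a hf]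
    exact Commute.zero_left b

lemma commute_cfc_real {𝔸 : Type*} [CStarAlgebra 𝔸] {a b : 𝔸} (ha : IsSelfAdjoint a)
    (h : Commute a b) (f : ℝ → ℝ) : Commute (cfc f a) b := by
  rw [cfc_real_eq_complex f ha]
  have := ha.isStarNormal
  exact commute_cfc_of_commute h (by rwa [ha.star_eq]) _

lemma key_commute {𝔸 : Type*} [CStarAlgebra 𝔸] [PartialOrder 𝔸] [StarOrderedRing 𝔸]
    {a b : 𝔸} (ha : 0 ≤ a) (h : a * b = -(b * a)) : a * b = b * a := by
  have hsa : IsSelfAdjoint a := IsSelfAdjoint.of_nonneg ha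
  have h2 : Commute (a ^ 2) b := by
    show a ^ 2 * b = b * a ^ 2
    have e1 : a * (a * b) = -(a * (b * a)) := by rw [h]; simp [mul_neg]
    have e2 : a * (b * a) = -(b * (a * a)) := by rw [← mul_assoc, ← mul_assoc, h]; simp [neg_mul]
    rw [pow_two, mul_assoc, e1, e2, neg_neg]
  have hsq : IsSelfAdjoint (a ^ 2) := hsa.pow 2
  have hcomm : Commute a b := by
    have h1 : CFC.sqrt (a ^ 2) = a := CFC.sqrt_sq a ha
    have h2' : Commute (CFC.sqrt (a ^ 2)) b := by
      have ha2 : (0 : 𝔸) ≤ a ^ 2 := by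
        rw [pow_two]
        nth_rewrite 2 [← hsa.star_eq]
        exact mul_star_self_nonneg a
      rw [CFC.sqrt_eq_cfc, cfc_nnreal_eq_real NNReal.sqrt (a ^ 2) ha2]
      exact commute_cfc_real hsq h2 _
    rwa [h1] at h2'
  exact hcomm


open ContinuousLinearMap in
theorem normal_of_sq_selfAdjoint_of_semidefinite
    {H : Type*} [NormedAddCommGroup H] [InnerProductSpace ℂ H] [CompleteSpace H]
    (T S A B : H →L[ℂ] H) (hA : IsSelfAdjoint A) (hB : IsSelfAdjoint B)
    (hT : T = A + Complex.I • B) (hsq : T ^ 2 = S) (hS : IsSelfAdjoint S)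
    (hsemi : 0 ≤ A ∨ A ≤ 0 ∨ 0 ≤ B ∨ B ≤ 0) :
    IsStarNormal T := by
  have hstarT : star T = A - Complex.I • B := by
    rw [hT, star_add, star_smul, hA.star_eq, hB.star_eq, Complex.star_def, Complex.conj_I,
      neg_smul, ← sub_eq_add_neg]
  have E : (A - Complex.I • B) ^ 2 = (A + Complex.I • B) ^ 2 := by
    have : star S = S := hS
    rw [← hsq, star_pow, hstarT, hT] at this
    exact this
  have keyE : (A + Complex.I • B) ^ 2 - (A - Complex.I • B) ^ 2
      = ((2 : ℂ) * Complex.I) • (A * B + B * A) := by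
    simp only [pow_two, mul_add, add_mul, mul_sub, sub_mul, smul_mul_assoc, mul_smul_comm,
      smul_smul, smul_add, smul_sub]
    module
  have h4 : ((2 : ℂ) * Complex.I) • (A * B + B * A) = 0 := by
    rw [← keyE, E, sub_self]
  have h0 : A * B + B * A = 0 := by
    rcases smul_eq_zero.mp h4 with h | h
    · exact absurd h (by simp [Complex.I_ne_zero])
    · exact h
  have habneg : A * B = -(B * A) := eq_neg_of_add_eq_zero_left h0
  have hc : A * B = B * A := by
    rcases hsemi with h | h | h | h
    · exact key_commute h habneg
    · have := key_commute (neg_nonneg.mpr h) (a := -A) (b := B)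
        (by rw [neg_mul, habneg, neg_neg, mul_neg, neg_neg])
      simpa [neg_mul, mul_neg, neg_eq_iff_eq_neg, neg_inj] using this
    · exact (key_commute h (by rw [habneg, neg_neg])).symm
    · have := key_commute (neg_nonneg.mpr h) (a := -B) (b := A)
        (by rw [neg_mul, mul_neg, neg_neg, habneg])
      simpa using this.symm
  constructor
  show star T * T = T * star T
  rw [hstarT, hT]
  simp only [mul_add, add_mul, sub_mul, mul_sub, smul_mul_assoc, mul_smul_comm, smul_smul]
  rw [hc]
  module
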